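/- Let p > 1, N ≥ 2 an integer, and k ∈ ℝ. Then for every θ ∈ (0, π/2), with f = cos, one has the identity E_{p,N,k}[cos](θ) = cos³(θ)·(α·tan²(θ) + β·k²), where α = (2p-3)·k² + (N-p)·k + 3 - N - p and β = (p-1)·k² + (N-p)·k + 1 - N. -/

import Mathlib

noncomputable section
open Real Set

/-- The differential expression `E_{p,N,k}[f](θ)` whose sign coincides with the sign of the
`p`-Laplacian of the quasiradial function `u(r,θ) = r^k · f(θ)` in the upper half-space. -/
def Ecal (p : ℝ) (N : ℕ) (k : ℝ) (f : ℝ → ℝ) (θ : ℝ) : ℝ :=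
  ((p - 1) * (deriv f θ) ^ 2 + k ^ 2 * (f θ) ^ 2) * deriv (deriv f) θ
    + k * ((2 * p - 3) * k + (N : ℝ) - p) * f θ * (deriv f θ) ^ 2
    + k ^ 3 * (k * (p - 1) + (N : ℝ) - p) * (f θ) ^ 3
    + ((N : ℝ) - 2) * ((deriv f θ) ^ 2 + k ^ 2 * (f θ) ^ 2) * deriv f θ * Real.cot θ

/-- For `f = cos`, the expression `E_{p,N,k}[cos](θ)` factors as
`cos³θ · (α·tan²θ + β·k²)` with `α = (2p-3)k² + (N-p)k + 3 - N - p` and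
`β = (p-1)k² + (N-p)k + 1 - N`. -/
theorem Ecal_cos_eq (p : ℝ) (hp : 1 < p) (N : ℕ) (hN : 2 ≤ N) (k : ℝ) :
    ∀ θ ∈ Ioo (0 : ℝ) (π / 2),
      Ecal p N k Real.cos θ =
        (Real.cos θ) ^ 3 *
          (((2 * p - 3) * k ^ 2 + ((N : ℝ) - p) * k + 3 - (N : ℝ) - p) * (Real.tan θ) ^ 2
            + ((p - 1) * k ^ 2 + ((N : ℝ) - p) * k + 1 - (N : ℝ)) * k ^ 2) := by
  intro θ hθ
  have hs : Real.sin θ ≠ 0 := ne_of_gt (Real.sin_pos_of_pos_of_lt_pi hθ.1 (hθ.2.trans_le (by linarith [Real.pi_pos])))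
  have hc : Real.cos θ ≠ 0 := ne_of_gt (Real.cos_pos_of_mem_Ioo ⟨by linarith [hθ.1, Real.pi_pos], hθ.2⟩)
  have hd1 : deriv Real.cos = fun x => -Real.sin x := by
    funext x; exact Real.deriv_cos
  have hd2 : deriv (deriv Real.cos) θ = -Real.cos θ := by
    rw [hd1]
    simp [Real.hasDerivAt_sin θ |>.neg.deriv]
  simp only [Ecal, hd2]
  simp only [hd1, Real.cot_eq_cos_div_sin, Real.tan_eq_sin_div_cos]
  field_simp
  ring
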